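/- Let I : 𝓛 → ℂ be a translation-invariant linear functional (I(f(·+c)) = I(f) for f ∈ 𝓛, c ∈ k). Then there exists a unique ℂ(Γ)-linear functional ∫^F on 𝓛(F) satisfying ∫^F f^{a,γ} = I(f)·X^γ for all f ∈ 𝓛, a ∈ F, γ ∈ Γ. Moreover 𝓛(F) is closed under translation by elements of F, ∫^F is translation-invariant (for g ∈ 𝓛(F) and τ ∈ F, the function x ↦ g(x+τ) lies in 𝓛(F) and has the same integral as g), and 𝓛(F) contains no nonzero constant function. -/

import Mathlib

noncomputable section

open MeasureTheory

/-- A field `F` with a split valuation `ν : F^× → Γ` (split by `t`), with residue field `k`,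
residue map `ρ : O_F → k`, where `Γ` has a minimal positive element `one`. -/
structure LiftSetup (Γ F k : Type*) [AddCommGroup Γ] [LinearOrder Γ] [IsOrderedAddMonoid Γ] [Field F] [Field k] where
  /-- the valuation (recorded on nonzero elements) -/
  ν : F → Γ
  /-- the splitting homomorphism `t : Γ → F^×` -/
  t : Γ → F
  /-- the residue map (recorded on the valuation ring) -/
  ρ : F → k
  /-- the minimal positive element of `Γ` -/
  one : Γ
  one_pos : 0 < one
  one_min : ∀ γ : Γ, 0 < γ → one ≤ γ
  ν_mul : ∀ x y : F, x ≠ 0 → y ≠ 0 → ν (x * y) = ν x + ν y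
  ν_add : ∀ x y : F, x ≠ 0 → y ≠ 0 → x + y ≠ 0 → min (ν x) (ν y) ≤ ν (x + y)
  t_ne : ∀ γ : Γ, t γ ≠ 0
  t_add : ∀ γ δ : Γ, t (γ + δ) = t γ * t δ
  ν_t : ∀ γ : Γ, ν (t γ) = γ
  ρ_add : ∀ x y : F, (x = 0 ∨ 0 ≤ ν x) → (y = 0 ∨ 0 ≤ ν y) → ρ (x + y) = ρ x + ρ y
  ρ_mul : ∀ x y : F, (x = 0 ∨ 0 ≤ ν x) → (y = 0 ∨ 0 ≤ ν y) → ρ (x * y) = ρ x * ρ y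
  ρ_one : ρ 1 = 1
  ρ_surj : ∀ u : k, ∃ x : F, (x = 0 ∨ 0 ≤ ν x) ∧ ρ x = u
  ρ_eq_zero : ∀ x : F, (x = 0 ∨ 0 ≤ ν x) → (ρ x = 0 ↔ (x = 0 ∨ 0 < ν x))

namespace LiftSetup

variable {Γ F k : Type*} [AddCommGroup Γ] [LinearOrder Γ] [IsOrderedAddMonoid Γ] [Field F] [Field k]
variable (S : LiftSetup Γ F k)

/-- The ring of integers `O_F` of the valuation. -/
def integers : Set F := {x | x = 0 ∨ 0 ≤ S.ν x}

/-- The translated fractional ideal `a + t(γ)O_F`. -/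
def fracIdeal (a : F) (γ : Γ) : Set F := {x | (x - a) * S.t (-γ) ∈ S.integers}

/-- The lift `f^{a,γ}` of a function `f` on the residue field `k`:
`f^{a,γ}(x) = f(ρ((x-a)t(-γ)))` for `x ∈ a + t(γ)O_F` and `0` otherwise. -/
def lift {A : Type*} [Zero A] (f : k → A) (a : F) (γ : Γ) : F → A :=
  (S.fracIdeal a γ).indicator fun x => f (S.ρ ((x - a) * S.t (-γ)))

/-- The homomorphism `η : F^× → k^×`, `x ↦ ρ(x t(-ν x))`. -/
def η (x : F) : k := S.ρ (x * S.t (-S.ν x))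

end LiftSetup

namespace LiftSetup
variable {Γ F k : Type*} [AddCommGroup Γ] [LinearOrder Γ] [IsOrderedAddMonoid Γ] [Field F] [Field k]
variable (S : LiftSetup Γ F k)


theorem ν_one : S.ν 1 = 0 := by
  have := S.ν_mul 1 1 one_ne_zero one_ne_zero
  rw [mul_one] at this
  exact (left_eq_add.mp this)

theorem ν_neg_one : S.ν (-1) = 0 := by
  have := S.ν_mul (-1) (-1) (by norm_num) (by norm_num)
  rw [neg_mul_neg, one_mul, S.ν_one] at this
  have h0 : S.ν (-1) + S.ν (-1) = 0 := this.symm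
  rcases lt_trichotomy (S.ν (-1)) 0 with h | h | h
  · exact absurd h0 (ne_of_lt (by simpa using add_lt_add h h))
  · exact h
  · exact absurd h0 (ne_of_gt (by simpa using add_lt_add h h))

theorem ν_neg (x : F) (hx : x ≠ 0) : S.ν (-x) = S.ν x := by
  have h := S.ν_mul (-1) x (by norm_num) hx
  rw [neg_one_mul, S.ν_neg_one, zero_add] at h
  exact h

theorem mem_integers {x : F} : x ∈ S.integers ↔ (x = 0 ∨ 0 ≤ S.ν x) := Iff.rfl

theorem zero_mem_integers : (0 : F) ∈ S.integers := Or.inl rfl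

theorem one_mem_integers : (1 : F) ∈ S.integers := Or.inr (le_of_eq S.ν_one.symm)

theorem neg_mem_integers {x : F} (hx : x ∈ S.integers) : -x ∈ S.integers := by
  rcases hx with h | h
  · subst h; simp [zero_mem_integers]
  · rcases eq_or_ne x 0 with rfl | hx0
    · simp [zero_mem_integers]
    · exact Or.inr (by rw [S.ν_neg x hx0]; exact h)

theorem add_mem_integers {x y : F} (hx : x ∈ S.integers) (hy : y ∈ S.integers) :
    x + y ∈ S.integers := by
  rcases hx with rfl | hx
  · simpa using hy
  rcases hy with rfl | hy
  · have hx' : x ∈ S.integers := Or.inr hx; simpa using hx'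
  rcases eq_or_ne x 0 with rfl | hx0
  · have hy' : y ∈ S.integers := Or.inr hy; simpa using hy'
  rcases eq_or_ne y 0 with rfl | hy0
  · have hx' : x ∈ S.integers := Or.inr hx; simpa using hx'
  rcases eq_or_ne (x + y) 0 with h | h
  · exact Or.inl h
  · exact Or.inr (le_trans (le_min hx hy) (S.ν_add x y hx0 hy0 h))

theorem sub_mem_integers {x y : F} (hx : x ∈ S.integers) (hy : y ∈ S.integers) :
    x - y ∈ S.integers := by
  rw [sub_eq_add_neg]; exact S.add_mem_integers hx (S.neg_mem_integers hy)

theorem mem_integers_cancel {x y : F} (hy : y ∈ S.integers) (hxy : x + y ∈ S.integers) :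
    x ∈ S.integers := by
  have := S.sub_mem_integers hxy hy; simpa using this

theorem mul_mem_integers {x y : F} (hx : x ∈ S.integers) (hy : y ∈ S.integers) :
    x * y ∈ S.integers := by
  rcases hx with rfl | hx
  · simp [zero_mem_integers]
  rcases hy with rfl | hy
  · simp [zero_mem_integers]
  rcases eq_or_ne x 0 with rfl | hx0
  · simp [zero_mem_integers]
  rcases eq_or_ne y 0 with rfl | hy0
  · simp [zero_mem_integers]
  · exact Or.inr (by rw [S.ν_mul x y hx0 hy0]; positivity)

theorem ρ_zero : S.ρ 0 = 0 := by
  have := S.ρ_add 0 0 (Or.inl rfl) (Or.inl rfl)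
  rw [add_zero] at this
  exact (left_eq_add.mp this)

theorem t_zero : S.t 0 = 1 := by
  have h := S.t_ne 0
  have h2 : S.t 0 * S.t 0 = S.t 0 * 1 := by rw [mul_one, ← S.t_add, add_zero]
  exact mul_left_cancel₀ h h2

theorem t_mul_neg (γ : Γ) : S.t γ * S.t (-γ) = 1 := by
  rw [← S.t_add, add_neg_cancel, S.t_zero]

theorem t_sub_mul (γ δ : Γ) : S.t γ * S.t (-δ) = S.t (γ - δ) := by
  rw [← S.t_add, ← sub_eq_add_neg]

theorem ρ_small {x : F} (h : x = 0 ∨ 0 < S.ν x) : S.ρ x = 0 := by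
  have hx : x = 0 ∨ 0 ≤ S.ν x := h.imp id le_of_lt
  exact (S.ρ_eq_zero x hx).mpr h

/-- Ultrametric: if `ν x < ν y` then `x + y ≠ 0` and `ν (x+y) = ν x`. -/
theorem ν_add_eq {x y : F} (hx : x ≠ 0) (hy : y ≠ 0) (h : S.ν x < S.ν y) :
    x + y ≠ 0 ∧ S.ν (x + y) = S.ν x := by
  have hxy : x + y ≠ 0 := by
    intro he
    have : y = -x := by linear_combination he
    rw [this, S.ν_neg x hx] at h
    exact lt_irrefl _ h
  refine ⟨hxy, ?_⟩
  have h1 : S.ν x ≤ S.ν (x + y) := le_trans (le_min le_rfl h.le) (S.ν_add x y hx hy hxy)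
  rcases eq_or_lt_of_le h1 with he | hlt
  · exact he.symm
  · exfalso
    have hny : (-y) ≠ 0 := neg_ne_zero.mpr hy
    have h2 : S.ν x = S.ν ((x + y) + (-y)) := by ring_nf
    have h3 : min (S.ν (x + y)) (S.ν (-y)) ≤ S.ν ((x + y) + -y) :=
      S.ν_add _ _ hxy hny (by simpa using hx)
    rw [← h2] at h3
    rw [S.ν_neg y hy] at h3
    have : S.ν x < min (S.ν (x + y)) (S.ν y) := lt_min hlt h
    exact absurd h3 (not_le.mpr this)

/-- a chosen section of the residue map -/
def sec (u : k) : F := (S.ρ_surj u).choose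

theorem sec_mem (u : k) : S.sec u ∈ S.integers := (S.ρ_surj u).choose_spec.1

theorem ρ_sec (u : k) : S.ρ (S.sec u) = u := (S.ρ_surj u).choose_spec.2

theorem mem_fracIdeal {x a : F} {γ : Γ} :
    x ∈ S.fracIdeal a γ ↔ (x - a) * S.t (-γ) ∈ S.integers := Iff.rfl

theorem lift_comp_add {A : Type*} [Zero A] (f : k → A) (a : F) (γ : Γ) (τ : F) :
    (fun x => S.lift f a γ (x + τ)) = S.lift f (a - τ) γ := by
  funext x
  have hx : x + τ - a = x - (a - τ) := by ring
  by_cases h : x ∈ S.fracIdeal (a - τ) γ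
  · rw [lift, lift, Set.indicator_of_mem h, Set.indicator_of_mem (by rwa [mem_fracIdeal, hx]), hx]
  · rw [lift, lift, Set.indicator_of_notMem h,
      Set.indicator_of_notMem (by rwa [mem_fracIdeal, hx])]


open scoped Classical in
theorem lift_eval_top {A : Type*} [Zero A] (f : k → A) (a b : F) (γM : Γ) (u : k) :
    S.lift f a γM (b + S.sec u * S.t γM) =
      (if b ∈ S.fracIdeal a γM then f (S.ρ ((b - a) * S.t (-γM)) + u) else 0) := by
  have hx : (b + S.sec u * S.t γM - a) * S.t (-γM) = (b - a) * S.t (-γM) + S.sec u := by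
    calc (b + S.sec u * S.t γM - a) * S.t (-γM)
        = (b - a) * S.t (-γM) + S.sec u * (S.t γM * S.t (-γM)) := by ring
      _ = (b - a) * S.t (-γM) + S.sec u := by rw [S.t_mul_neg, mul_one]
  split_ifs with h
  · have hmem : b + S.sec u * S.t γM ∈ S.fracIdeal a γM := by
      rw [mem_fracIdeal, hx]
      exact S.add_mem_integers h (S.sec_mem u)
    simp only [LiftSetup.lift]
    rw [Set.indicator_of_mem hmem, hx, S.ρ_add _ _ h (S.sec_mem u), S.ρ_sec]
  · have hmem : b + S.sec u * S.t γM ∉ S.fracIdeal a γM := by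
      rw [mem_fracIdeal, hx]
      intro hc
      exact h (S.mem_integers_cancel (S.sec_mem u) hc)
    simp only [LiftSetup.lift]
    rw [Set.indicator_of_notMem hmem]

theorem lift_eval_low {A : Type*} [Zero A] (f : k → A) (a b : F) {γ γM : Γ} (hγ : γ < γM)
    (u : k) :
    S.lift f a γ (b + S.sec u * S.t γM) = S.lift f a γ b := by
  set w : F := S.sec u * S.t (γM - γ) with hw
  have hx : (b + S.sec u * S.t γM - a) * S.t (-γ) = (b - a) * S.t (-γ) + w := by
    calc (b + S.sec u * S.t γM - a) * S.t (-γ)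
        = (b - a) * S.t (-γ) + S.sec u * (S.t γM * S.t (-γ)) := by ring
      _ = (b - a) * S.t (-γ) + w := by rw [S.t_sub_mul]
  have hwmem : w ∈ S.integers :=
    S.mul_mem_integers (S.sec_mem u) (Or.inr (by rw [S.ν_t]; exact sub_nonneg.mpr hγ.le))
  have hwρ : S.ρ w = 0 := by
    rcases eq_or_ne (S.sec u) 0 with h0 | h0
    · rw [hw, h0, zero_mul, S.ρ_zero]
    · refine S.ρ_small (Or.inr ?_)
      rw [hw, S.ν_mul _ _ h0 (S.t_ne _), S.ν_t]
      have hsec : 0 ≤ S.ν (S.sec u) := (S.sec_mem u).resolve_left h0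
      have : (0 : Γ) < γM - γ := sub_pos.mpr hγ
      calc (0 : Γ) < γM - γ := this
        _ ≤ S.ν (S.sec u) + (γM - γ) := le_add_of_nonneg_left hsec
  by_cases h : b ∈ S.fracIdeal a γ
  · have hmem : b + S.sec u * S.t γM ∈ S.fracIdeal a γ := by
      rw [mem_fracIdeal, hx]
      exact S.add_mem_integers h hwmem
    simp only [LiftSetup.lift]
    rw [Set.indicator_of_mem hmem, Set.indicator_of_mem h, hx,
      S.ρ_add _ _ h hwmem, hwρ, add_zero]
  · have hmem : b + S.sec u * S.t γM ∉ S.fracIdeal a γ := by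
      rw [mem_fracIdeal, hx]
      intro hc
      exact h (S.mem_integers_cancel hwmem hc)
    simp only [LiftSetup.lift]
    rw [Set.indicator_of_notMem hmem, Set.indicator_of_notMem h]

end LiftSetup

section CGamma

variable (Γ : Type*) [AddCommGroup Γ] [LinearOrder Γ] [IsOrderedAddMonoid Γ]

instance : IsDomain (AddMonoidAlgebra ℂ Γ) := NoZeroDivisors.to_isDomain _

/-- `ℂ(Γ)`: the field of fractions of the complex group algebra of `Γ`. -/
abbrev CGamma : Type _ := FractionRing (AddMonoidAlgebra ℂ Γ)

/-- The canonical embedding `ℂ → ℂ(Γ)`. -/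
def embC : ℂ →+* CGamma Γ :=
  (algebraMap (AddMonoidAlgebra ℂ Γ) (CGamma Γ)).comp AddMonoidAlgebra.singleZeroRingHom

variable {Γ}

/-- The basis element `X^γ` of `ℂ(Γ)`. -/
def Xp (γ : Γ) : CGamma Γ :=
  algebraMap (AddMonoidAlgebra ℂ Γ) (CGamma Γ) (AddMonoidAlgebra.single γ 1)

end CGamma


section LemmaB

variable {Γ k : Type*} [AddCommGroup Γ] [LinearOrder Γ] [IsOrderedAddMonoid Γ] [Field k]

theorem lemmaB {ι : Type*} (𝓛 : Submodule ℂ (k → ℂ))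
    (h𝓛const : ∀ c : ℂ, (fun _ : k => c) ∈ 𝓛 → c = 0)
    (Iext : (k → ℂ) →ₗ[ℂ] ℂ)
    (s : Finset ι) (c : ι → CGamma Γ) (h : ι → k → ℂ)
    (hmem : ∀ i ∈ s, h i ∈ 𝓛) (d : CGamma Γ)
    (heq : ∀ u : k, ∑ i ∈ s, c i * embC Γ (h i u) = d) :
    d = 0 ∧ ∑ i ∈ s, c i * embC Γ (Iext (h i)) = 0 := by
  haveI hfree : Module.Free ℂ (CGamma Γ) := Module.Free.of_divisionRing ℂ _
  haveI : Module.Projective ℂ (CGamma Γ) := Module.Projective.of_free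
  have hsmul : ∀ (z : ℂ) (v : CGamma Γ), z • v = embC Γ z * v := by
    intro z v
    rw [Algebra.smul_def, IsScalarTower.algebraMap_apply ℂ (AddMonoidAlgebra ℂ Γ) (CGamma Γ)]
    rfl
  have key : ∀ φ : Module.Dual ℂ (CGamma Γ),
      φ d = 0 ∧ φ (∑ i ∈ s, c i * embC Γ (Iext (h i))) = 0 := by
    intro φ
    have hφ : ∀ (z : ℂ) (v : CGamma Γ), φ (v * embC Γ z) = z * φ v := by
      intro z v
      rw [mul_comm, ← hsmul, φ.map_smul, smul_eq_mul]
    have hF0eq : ∀ u, (∑ i ∈ s, φ (c i) • h i) u = φ d := by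
      intro u
      rw [← heq u, map_sum, Finset.sum_apply]
      refine Finset.sum_congr rfl fun i _ => ?_
      rw [Pi.smul_apply, smul_eq_mul, hφ, mul_comm]
    have hF0mem : (∑ i ∈ s, φ (c i) • h i) ∈ 𝓛 := Submodule.sum_smul_mem 𝓛 _ hmem
    have hconst : φ d = 0 := by
      refine h𝓛const _ ?_
      have he : (fun _ : k => φ d) = (∑ i ∈ s, φ (c i) • h i) :=
        funext fun u => (hF0eq u).symm
      rw [he]; exact hF0mem
    have hF0zero : (∑ i ∈ s, φ (c i) • h i) = (0 : k → ℂ) :=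
      funext fun u => by rw [hF0eq u, hconst]; rfl
    refine ⟨hconst, ?_⟩
    have hIext : ∑ i ∈ s, φ (c i) * Iext (h i) = 0 := by
      have h1 : Iext (∑ i ∈ s, φ (c i) • h i) = 0 := by rw [hF0zero, map_zero]
      rw [map_sum] at h1
      simpa [smul_eq_mul] using h1
    rw [map_sum]
    calc ∑ i ∈ s, φ (c i * embC Γ (Iext (h i)))
        = ∑ i ∈ s, φ (c i) * Iext (h i) := by
          refine Finset.sum_congr rfl fun i _ => ?_
          rw [hφ, mul_comm]
      _ = 0 := hIext
  constructor
  · exact (Module.forall_dual_apply_eq_zero_iff ℂ d).mp fun φ => (key φ).1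
  · exact (Module.forall_dual_apply_eq_zero_iff ℂ _).mp fun φ => (key φ).2

end LemmaB


section LemmaA

variable {Γ F k : Type*} [AddCommGroup Γ] [LinearOrder Γ] [IsOrderedAddMonoid Γ] [Field F] [Field k]

theorem lemmaA_aux (S : LiftSetup Γ F k) (𝓛 : Submodule ℂ (k → ℂ))
    (h𝓛trans : ∀ f ∈ 𝓛, ∀ c : k, (fun u => f (u + c)) ∈ 𝓛)
    (h𝓛const : ∀ c : ℂ, (fun _ : k => c) ∈ 𝓛 → c = 0)
    (Iext : (k → ℂ) →ₗ[ℂ] ℂ)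
    (hItrans : ∀ f ∈ 𝓛, ∀ c : k, Iext (fun u => f (u + c)) = Iext f)
    {ι : Type*} (n : ℕ) :
    ∀ (s : Finset ι) (c : ι → CGamma Γ) (f : ι → k → ℂ) (a : ι → F) (γ : ι → Γ),
      (s.image γ).card ≤ n → (∀ i ∈ s, f i ∈ 𝓛) →
      (∀ x : F, ∑ i ∈ s, c i * S.lift (fun u => embC Γ (f i u)) (a i) (γ i) x = 0) →
      ∑ i ∈ s, c i * embC Γ (Iext (f i)) * Xp (γ i) = 0 := by
  classical
  induction n with
  | zero =>
    intro s c f a γ hcard _ _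
    have : s.image γ = ∅ := Finset.card_eq_zero.mp (Nat.le_zero.mp hcard)
    have hs : s = ∅ := Finset.image_eq_empty.mp this
    simp [hs]
  | succ n IH =>
    intro s c f a γ hcard hf hzero
    rcases Finset.eq_empty_or_nonempty s with rfl | hs
    · simp
    have himg : (s.image γ).Nonempty := hs.image γ
    have hle : ∀ i ∈ s, γ i ≤ (s.image γ).max' himg := fun i hi =>
      Finset.le_max' _ _ (Finset.mem_image_of_mem γ hi)
    have hlow_lt : ∀ i ∈ s.filter (fun i => ¬ γ i = (s.image γ).max' himg),
        γ i < (s.image γ).max' himg := by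
      intro i hi
      rw [Finset.mem_filter] at hi
      exact lt_of_le_of_ne (hle i hi.1) hi.2
    have hmain : ∀ b : F,
        (∑ i ∈ s.filter (fun i => ¬ γ i = (s.image γ).max' himg),
            c i * S.lift (fun u => embC Γ (f i u)) (a i) (γ i) b = 0) ∧
        (∑ i ∈ (s.filter (fun i => γ i = (s.image γ).max' himg)).filter
              (fun i => b ∈ S.fracIdeal (a i) ((s.image γ).max' himg)),
            c i * embC Γ (Iext (f i)) = 0) := by
      intro b
      have hψ : ∀ u : k,
          ∑ i ∈ (s.filter (fun i => γ i = (s.image γ).max' himg)).filter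
              (fun i => b ∈ S.fracIdeal (a i) ((s.image γ).max' himg)),
            c i * embC Γ ((fun v => f i (v + S.ρ ((b - a i) * S.t (-(s.image γ).max' himg)))) u) =
          - ∑ i ∈ s.filter (fun i => ¬ γ i = (s.image γ).max' himg),
              c i * S.lift (fun u => embC Γ (f i u)) (a i) (γ i) b := by
        intro u
        have hz := hzero (b + S.sec u * S.t ((s.image γ).max' himg))
        rw [← Finset.sum_filter_add_sum_filter_not s
          (fun i => γ i = (s.image γ).max' himg)] at hz
        have htop : ∑ i ∈ s.filter (fun i => γ i = (s.image γ).max' himg),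
            c i * S.lift (fun u => embC Γ (f i u)) (a i) (γ i)
              (b + S.sec u * S.t ((s.image γ).max' himg))
            = ∑ i ∈ (s.filter (fun i => γ i = (s.image γ).max' himg)).filter
                (fun i => b ∈ S.fracIdeal (a i) ((s.image γ).max' himg)),
              c i * embC Γ (f i (u + S.ρ ((b - a i) * S.t (-(s.image γ).max' himg)))) := by
          conv_rhs => rw [Finset.sum_filter]
          refine Finset.sum_congr rfl fun i hi => ?_
          have hγi : γ i = (s.image γ).max' himg := (Finset.mem_filter.mp hi).2
          rw [hγi, S.lift_eval_top, mul_ite, mul_zero]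
          split_ifs with h
          · rw [add_comm u]
          · rfl
        have hlow : ∑ i ∈ s.filter (fun i => ¬ γ i = (s.image γ).max' himg),
            c i * S.lift (fun u => embC Γ (f i u)) (a i) (γ i)
              (b + S.sec u * S.t ((s.image γ).max' himg))
            = ∑ i ∈ s.filter (fun i => ¬ γ i = (s.image γ).max' himg),
              c i * S.lift (fun u => embC Γ (f i u)) (a i) (γ i) b :=
          Finset.sum_congr rfl fun i hi => by
            rw [S.lift_eval_low _ _ _ (hlow_lt i hi)]
        rw [htop, hlow] at hz
        exact eq_neg_of_add_eq_zero_left hz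
      have hB := lemmaB 𝓛 h𝓛const Iext _ c
        (fun i => fun v => f i (v + S.ρ ((b - a i) * S.t (-(s.image γ).max' himg))))
        (fun i hi => h𝓛trans (f i)
          (hf i (Finset.mem_of_mem_filter i (Finset.mem_of_mem_filter i hi))) _) _ hψ
      obtain ⟨hd, hsum⟩ := hB
      constructor
      · exact neg_eq_zero.mp hd
      · rw [← hsum]
        refine Finset.sum_congr rfl fun i hi => ?_
        congr 1
        congr 1
        exact (hItrans (f i)
          (hf i (Finset.mem_of_mem_filter i (Finset.mem_of_mem_filter i hi))) _).symm
    have hlowzero : ∑ i ∈ s.filter (fun i => ¬ γ i = (s.image γ).max' himg),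
        c i * embC Γ (Iext (f i)) * Xp (γ i) = 0 := by
      refine IH _ c f a γ ?_ (fun i hi => hf i (Finset.mem_of_mem_filter i hi))
        (fun b => (hmain b).1)
      have hsub : (s.filter (fun i => ¬ γ i = (s.image γ).max' himg)).image γ ⊂ s.image γ := by
        refine Finset.ssubset_iff_subset_ne.mpr
          ⟨Finset.image_subset_image (Finset.filter_subset _ _), ?_⟩
        intro he
        have hM : (s.image γ).max' himg ∈
            (s.filter (fun i => ¬ γ i = (s.image γ).max' himg)).image γ := by
          rw [he]; exact (s.image γ).max'_mem himg
        rw [Finset.mem_image] at hM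
        obtain ⟨i, hi, hgi⟩ := hM
        exact (Finset.mem_filter.mp hi).2 hgi
      have := Finset.card_lt_card hsub
      omega
    have htopzero : ∑ i ∈ s.filter (fun i => γ i = (s.image γ).max' himg),
        c i * embC Γ (Iext (f i)) = 0 := by
      letI R : Setoid ι :=
        ⟨fun i j => (a i - a j) * S.t (-(s.image γ).max' himg) ∈ S.integers,
          ⟨fun i => by simpa using S.zero_mem_integers,
           fun {i j} h => by
             have h2 : (a j - a i) * S.t (-(s.image γ).max' himg) =
                 -((a i - a j) * S.t (-(s.image γ).max' himg)) := by ring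
             show (a j - a i) * S.t (-(s.image γ).max' himg) ∈ S.integers
             rw [h2]
             exact S.neg_mem_integers h,
           fun {i j l} h1 h2 => by
             have := S.add_mem_integers h1 h2
             have h3 : (a i - a j) * S.t (-(s.image γ).max' himg) +
                 (a j - a l) * S.t (-(s.image γ).max' himg) =
                 (a i - a l) * S.t (-(s.image γ).max' himg) := by ring
             rw [h3] at this
             exact this⟩⟩
      haveI : DecidableRel R.r := fun _ _ => Classical.dec _
      rw [Finset.sum_partition R]
      refine Finset.sum_eq_zero fun xbar hxbar => ?_
      rw [Finset.mem_image] at hxbar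
      obtain ⟨j, hj, rfl⟩ := hxbar
      have hkey := (hmain (a j)).2
      have hfeq : (s.filter (fun i => γ i = (s.image γ).max' himg)).filter
            (fun y => ⟦y⟧ = ⟦j⟧) =
          (s.filter (fun i => γ i = (s.image γ).max' himg)).filter
            (fun i => a j ∈ S.fracIdeal (a i) ((s.image γ).max' himg)) := by
        refine Finset.filter_congr fun i _ => ?_
        rw [Quotient.eq]
        constructor
        · intro h
          exact R.iseqv.symm h
        · intro h
          exact R.iseqv.symm h
      rw [hfeq]
      exact hkey
    rw [← Finset.sum_filter_add_sum_filter_not s (fun i => γ i = (s.image γ).max' himg)]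
    have h1 : ∑ i ∈ s.filter (fun i => γ i = (s.image γ).max' himg),
        c i * embC Γ (Iext (f i)) * Xp (γ i)
        = (∑ i ∈ s.filter (fun i => γ i = (s.image γ).max' himg),
            c i * embC Γ (Iext (f i))) * Xp ((s.image γ).max' himg) := by
      rw [Finset.sum_mul]
      exact Finset.sum_congr rfl fun i hi => by rw [(Finset.mem_filter.mp hi).2]
    rw [h1, htopzero, zero_mul, zero_add]
    exact hlowzero

theorem lemmaA (S : LiftSetup Γ F k) (𝓛 : Submodule ℂ (k → ℂ))
    (h𝓛trans : ∀ f ∈ 𝓛, ∀ c : k, (fun u => f (u + c)) ∈ 𝓛)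
    (h𝓛const : ∀ c : ℂ, (fun _ : k => c) ∈ 𝓛 → c = 0)
    (Iext : (k → ℂ) →ₗ[ℂ] ℂ)
    (hItrans : ∀ f ∈ 𝓛, ∀ c : k, Iext (fun u => f (u + c)) = Iext f)
    {ι : Type*} (s : Finset ι) (c : ι → CGamma Γ) (f : ι → k → ℂ) (a : ι → F) (γ : ι → Γ)
    (hf : ∀ i ∈ s, f i ∈ 𝓛)
    (hzero : ∀ x : F, ∑ i ∈ s, c i * S.lift (fun u => embC Γ (f i u)) (a i) (γ i) x = 0) :
    ∑ i ∈ s, c i * embC Γ (Iext (f i)) * Xp (γ i) = 0 :=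
  lemmaA_aux S 𝓛 h𝓛trans h𝓛const Iext hItrans (s.image γ).card s c f a γ le_rfl hf hzero

end LemmaA

section Statement2

variable {Γ F k : Type*} [AddCommGroup Γ] [LinearOrder Γ] [IsOrderedAddMonoid Γ] [Field F] [Field k]

/-- `𝓛(F)`: the `ℂ(Γ)`-span of the lifts `f^{a,γ}` of functions `f ∈ 𝓛`. -/
def LFspan (S : LiftSetup Γ F k) (𝓛 : Submodule ℂ (k → ℂ)) :
    Submodule (CGamma Γ) (F → CGamma Γ) :=
  Submodule.span (CGamma Γ)
    {g | ∃ f : k → ℂ, f ∈ 𝓛 ∧ ∃ (a : F) (γ : Γ), g = S.lift (fun u => embC Γ (f u)) a γ}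

theorem liftC_mem (S : LiftSetup Γ F k) (𝓛 : Submodule ℂ (k → ℂ))
    {f : k → ℂ} (hf : f ∈ 𝓛) (a : F) (γ : Γ) :
    S.lift (fun u => embC Γ (f u)) a γ ∈ LFspan S 𝓛 :=
  Submodule.subset_span ⟨f, hf, a, γ, rfl⟩


section MainLemmas

variable {Γ F k : Type*} [AddCommGroup Γ] [LinearOrder Γ] [IsOrderedAddMonoid Γ] [Field F] [Field k]

/-- `𝓛(F)` is closed under translation. -/
theorem LFspan_trans (S : LiftSetup Γ F k) (𝓛 : Submodule ℂ (k → ℂ)) :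
    ∀ g ∈ LFspan S 𝓛, ∀ τ : F, (fun x => g (x + τ)) ∈ LFspan S 𝓛 := by
  intro g hg τ
  induction hg using Submodule.span_induction with
  | mem x hx =>
    obtain ⟨f, hf, a, γ, rfl⟩ := hx
    rw [S.lift_comp_add]
    exact Submodule.subset_span ⟨f, hf, a - τ, γ, rfl⟩
  | zero =>
    have h : (fun x : F => (0 : F → CGamma Γ) (x + τ)) = 0 := rfl
    rw [h]
    exact Submodule.zero_mem _
  | add x y hx hy ihx ihy =>
    have h : (fun z : F => (x + y) (z + τ)) =
        (fun z : F => x (z + τ)) + (fun z : F => y (z + τ)) := rfl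
    rw [h]
    exact Submodule.add_mem _ ihx ihy
  | smul r x hx ih =>
    have h : (fun z : F => (r • x) (z + τ)) = r • (fun z : F => x (z + τ)) := rfl
    rw [h]
    exact Submodule.smul_mem _ r ih

/-- Linear functionals on `𝓛(F)` agreeing on all lifts are equal. -/
theorem LFspan_ext (S : LiftSetup Γ F k) (𝓛 : Submodule ℂ (k → ℂ))
    (J₁ J₂ : LFspan S 𝓛 →ₗ[CGamma Γ] CGamma Γ)
    (h : ∀ (f : k → ℂ) (hf : f ∈ 𝓛) (a : F) (γ : Γ),
      J₁ ⟨S.lift (fun u => embC Γ (f u)) a γ, liftC_mem S 𝓛 hf a γ⟩ =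
      J₂ ⟨S.lift (fun u => embC Γ (f u)) a γ, liftC_mem S 𝓛 hf a γ⟩) :
    J₁ = J₂ := by
  ext ⟨v, hv⟩
  induction hv using Submodule.span_induction with
  | mem x hx =>
    obtain ⟨f, hf, a, γ, rfl⟩ := hx
    exact h f hf a γ
  | zero =>
    show J₁ 0 = J₂ 0
    rw [map_zero, map_zero]
  | add x y hx hy ihx ihy =>
    show J₁ (⟨x, hx⟩ + ⟨y, hy⟩) = J₂ (⟨x, hx⟩ + ⟨y, hy⟩)
    rw [map_add, map_add, ihx, ihy]
  | smul r x hx ih =>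
    show J₁ (r • ⟨x, hx⟩) = J₂ (r • ⟨x, hx⟩)
    rw [LinearMap.map_smul, LinearMap.map_smul, ih]

/-- The integral of a lift is well defined. -/
theorem lift_int_eq (S : LiftSetup Γ F k) (𝓛 : Submodule ℂ (k → ℂ))
    (h𝓛trans : ∀ f ∈ 𝓛, ∀ c : k, (fun u => f (u + c)) ∈ 𝓛)
    (h𝓛const : ∀ c : ℂ, (fun _ : k => c) ∈ 𝓛 → c = 0)
    (Iext : (k → ℂ) →ₗ[ℂ] ℂ)
    (hItrans : ∀ f ∈ 𝓛, ∀ c : k, Iext (fun u => f (u + c)) = Iext f)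
    {f f' : k → ℂ} (hf : f ∈ 𝓛) (hf' : f' ∈ 𝓛) {a a' : F} {γ γ' : Γ}
    (h : S.lift (fun u => embC Γ (f u)) a γ = S.lift (fun u => embC Γ (f' u)) a' γ') :
    embC Γ (Iext f) * Xp γ = embC Γ (Iext f') * Xp γ' := by
  have hA := lemmaA S 𝓛 h𝓛trans h𝓛const Iext hItrans (Finset.univ : Finset (Fin 2))
    ![1, -1] ![f, f'] ![a, a'] ![γ, γ'] ?hf ?hzero
  case hf =>
    intro i _
    fin_cases i
    · exact hf
    · exact hf'
  case hzero =>
    intro x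
    rw [Fin.sum_univ_two]
    simp only [Matrix.cons_val_zero, Matrix.cons_val_one, Matrix.head_cons]
    rw [h]
    ring
  rw [Fin.sum_univ_two] at hA
  simp only [Matrix.cons_val_zero, Matrix.cons_val_one, Matrix.head_cons] at hA
  have : embC Γ (Iext f) * Xp γ - embC Γ (Iext f') * Xp γ' = 0 := by
    rw [← hA]; ring
  linear_combination this

/-- Vanishing far away. -/
theorem LFspan_vanish (S : LiftSetup Γ F k) (𝓛 : Submodule ℂ (k → ℂ)) :
    ∀ g ∈ LFspan S 𝓛, ∃ γ0 : Γ, ∀ x : F, x ≠ 0 → S.ν x < γ0 → g x = 0 := by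
  classical
  intro g hg
  induction hg using Submodule.span_induction with
  | mem x hx =>
    obtain ⟨f, hf, a, γ, rfl⟩ := hx
    refine ⟨if a = 0 then γ else min γ (S.ν a), fun x hx0 hlt => ?_⟩
    refine Set.indicator_of_notMem ?_ _
    intro hmem
    rw [LiftSetup.mem_fracIdeal] at hmem
    by_cases ha : a = 0
    · subst ha
      rw [if_pos rfl] at hlt
      have hne : (x - 0) * S.t (-γ) ≠ 0 := by
        simp only [sub_zero]
        exact mul_ne_zero hx0 (S.t_ne _)
      have h0 : 0 ≤ S.ν ((x - 0) * S.t (-γ)) := hmem.resolve_left hne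
      rw [sub_zero, S.ν_mul _ _ hx0 (S.t_ne _), S.ν_t] at h0
      rw [← sub_eq_add_neg] at h0
      exact absurd hlt (not_lt.mpr (sub_nonneg.mp h0))
    · rw [if_neg ha] at hlt
      by_cases hxa : x = a
      · subst hxa
        exact absurd hlt (not_lt.mpr (min_le_right _ _))
      · have hsub : x - a ≠ 0 := sub_ne_zero.mpr hxa
        have hne : (x - a) * S.t (-γ) ≠ 0 := mul_ne_zero hsub (S.t_ne _)
        have h0 : 0 ≤ S.ν ((x - a) * S.t (-γ)) := hmem.resolve_left hne
        rw [S.ν_mul _ _ hsub (S.t_ne _), S.ν_t] at h0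
        rw [← sub_eq_add_neg] at h0
        have hγ : γ ≤ S.ν (x - a) := sub_nonneg.mp h0
        have hνxa : S.ν (x - a) = S.ν x := by
          rw [sub_eq_add_neg]
          exact (S.ν_add_eq hx0 (neg_ne_zero.mpr ha)
            (by rw [S.ν_neg a ha]; exact hlt.trans_le (min_le_right _ _))).2
        rw [hνxa] at hγ
        exact absurd (hlt.trans_le (min_le_left _ _)) (not_lt.mpr hγ)
  | zero => exact ⟨0, fun x _ _ => rfl⟩
  | add x y hx hy ihx ihy =>
    obtain ⟨γ1, h1⟩ := ihx
    obtain ⟨γ2, h2⟩ := ihy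
    refine ⟨min γ1 γ2, fun z hz0 hlt => ?_⟩
    have : (x + y) z = x z + y z := rfl
    rw [this, h1 z hz0 (hlt.trans_le (min_le_left _ _)),
      h2 z hz0 (hlt.trans_le (min_le_right _ _)), add_zero]
  | smul r x hx ih =>
    obtain ⟨γ1, h1⟩ := ih
    refine ⟨γ1, fun z hz0 hlt => ?_⟩
    have : (r • x) z = r * x z := rfl
    rw [this, h1 z hz0 hlt, mul_zero]

end MainLemmas


section ExistsJ

variable {Γ F k : Type*} [AddCommGroup Γ] [LinearOrder Γ] [IsOrderedAddMonoid Γ] [Field F] [Field k]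

set_option maxHeartbeats 1000000 in
theorem exists_J (S : LiftSetup Γ F k) (𝓛 : Submodule ℂ (k → ℂ))
    (h𝓛trans : ∀ f ∈ 𝓛, ∀ c : k, (fun u => f (u + c)) ∈ 𝓛)
    (h𝓛const : ∀ c : ℂ, (fun _ : k => c) ∈ 𝓛 → c = 0)
    (Iext : (k → ℂ) →ₗ[ℂ] ℂ)
    (hItrans : ∀ f ∈ 𝓛, ∀ c : k, Iext (fun u => f (u + c)) = Iext f) :
    ∃ J : LFspan S 𝓛 →ₗ[CGamma Γ] CGamma Γ,
      ∀ (f : k → ℂ) (hf : f ∈ 𝓛) (a : F) (γ : Γ),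
        J ⟨S.lift (fun u => embC Γ (f u)) a γ, liftC_mem S 𝓛 hf a γ⟩
          = embC Γ (Iext f) * Xp γ := by
  classical
  set G : Set (F → CGamma Γ) :=
    {g | ∃ f : k → ℂ, f ∈ 𝓛 ∧ ∃ (a : F) (γ : Γ), g = S.lift (fun u => embC Γ (f u)) a γ}
    with hG
  have hdata : ∀ g : G, ∃ p : (k → ℂ) × F × Γ, p.1 ∈ 𝓛 ∧
      (g : F → CGamma Γ) = S.lift (fun u => embC Γ (p.1 u)) p.2.1 p.2.2 := by
    rintro ⟨g, f, hf, a, γ, hg⟩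
    exact ⟨(f, a, γ), hf, hg⟩
  choose pd hp1 hp2 using hdata
  set ℓ : (G →₀ CGamma Γ) →ₗ[CGamma Γ] (F → CGamma Γ) :=
    Finsupp.linearCombination _ Subtype.val with hℓ
  have hrange : LinearMap.range ℓ = LFspan S 𝓛 := by
    rw [hℓ, Finsupp.range_linearCombination, Subtype.range_coe, hG]
    rfl
  set φ : G → CGamma Γ := fun g => embC Γ (Iext (pd g).1) * Xp (pd g).2.2 with hφ
  set ψ : (G →₀ CGamma Γ) →ₗ[CGamma Γ] CGamma Γ := Finsupp.linearCombination _ φ with hψ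
  have hker : LinearMap.ker ℓ ≤ LinearMap.ker ψ := by
    intro l hl
    rw [LinearMap.mem_ker] at hl ⊢
    have hsum : ∀ x : F, ∑ g ∈ l.support,
        l g * S.lift (fun u => embC Γ ((pd g).1 u)) (pd g).2.1 (pd g).2.2 x = 0 := by
      intro x
      have hz : ℓ l x = 0 := by rw [congrFun hl x]; rfl
      rw [hℓ, Finsupp.linearCombination_apply, Finsupp.sum, Finset.sum_apply] at hz
      rw [← hz]
      refine Finset.sum_congr rfl fun g _ => ?_
      rw [← hp2 g]
      rfl
    have hA := lemmaA S 𝓛 h𝓛trans h𝓛const Iext hItrans l.support l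
      (fun g => (pd g).1) (fun g => (pd g).2.1) (fun g => (pd g).2.2)
      (fun g _ => hp1 g) hsum
    rw [hψ, Finsupp.linearCombination_apply, Finsupp.sum, ← hA]
    refine Finset.sum_congr rfl fun g _ => ?_
    rw [smul_eq_mul, mul_assoc]
  set e := LinearMap.quotKerEquivRange ℓ with he
  refine ⟨(Submodule.liftQ _ ψ hker).comp
      ((e.symm.toLinearMap).comp (LinearEquiv.ofEq _ _ hrange.symm).toLinearMap), ?_⟩
  intro f hf a γ
  have hg0 : S.lift (fun u => embC Γ (f u)) a γ ∈ G := ⟨f, hf, a, γ, rfl⟩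
  have hl : ℓ (Finsupp.single (⟨S.lift (fun u => embC Γ (f u)) a γ, hg0⟩ : G) 1)
      = S.lift (fun u => embC Γ (f u)) a γ := by
    rw [hℓ, Finsupp.linearCombination_single, one_smul]
  have hsymm : e.symm ((LinearEquiv.ofEq _ _ hrange.symm)
        ⟨S.lift (fun u => embC Γ (f u)) a γ, liftC_mem S 𝓛 hf a γ⟩) =
      Submodule.Quotient.mk
        (Finsupp.single (⟨S.lift (fun u => embC Γ (f u)) a γ, hg0⟩ : G) 1) := by
    rw [LinearEquiv.symm_apply_eq]
    apply Subtype.ext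
    rw [he, LinearMap.quotKerEquivRange_apply_mk, hl]
    rfl
  rw [LinearMap.comp_apply, LinearMap.comp_apply, LinearEquiv.coe_toLinearMap,
    LinearEquiv.coe_toLinearMap, hsymm, Submodule.liftQ_apply, hψ,
    Finsupp.linearCombination_single, one_smul, hφ]
  exact (lift_int_eq S 𝓛 h𝓛trans h𝓛const Iext hItrans
    (hp1 ⟨S.lift (fun u => embC Γ (f u)) a γ, hg0⟩) hf
    (hp2 ⟨S.lift (fun u => embC Γ (f u)) a γ, hg0⟩).symm)

end ExistsJ

/-- Given a translation-invariant linear functional `I` on `𝓛`, there is a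
unique `ℂ(Γ)`-linear functional `∫^F` on `𝓛(F)` with `∫^F f^{a,γ} = I(f)·X^γ`; moreover
`𝓛(F)` is closed under translation, any such functional is translation-invariant, and `𝓛(F)`
contains no nonzero constant function. -/
theorem statement2 (S : LiftSetup Γ F k)
    (𝓛 : Submodule ℂ (k → ℂ))
    (h𝓛trans : ∀ f ∈ 𝓛, ∀ c : k, (fun u => f (u + c)) ∈ 𝓛)
    (h𝓛const : ∀ c : ℂ, (fun _ : k => c) ∈ 𝓛 → c = 0)
    (I : 𝓛 →ₗ[ℂ] ℂ)
    (hI : ∀ (f : k → ℂ) (hf : f ∈ 𝓛) (c : k),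
      I ⟨fun u => f (u + c), h𝓛trans f hf c⟩ = I ⟨f, hf⟩) :
    (∃! J : LFspan S 𝓛 →ₗ[CGamma Γ] CGamma Γ,
       ∀ (f : k → ℂ) (hf : f ∈ 𝓛) (a : F) (γ : Γ),
         J ⟨S.lift (fun u => embC Γ (f u)) a γ, liftC_mem S 𝓛 hf a γ⟩
           = embC Γ (I ⟨f, hf⟩) * Xp γ) ∧
    (∀ g ∈ LFspan S 𝓛, ∀ τ : F, (fun x => g (x + τ)) ∈ LFspan S 𝓛) ∧
    (∀ J : LFspan S 𝓛 →ₗ[CGamma Γ] CGamma Γ,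
       (∀ (f : k → ℂ) (hf : f ∈ 𝓛) (a : F) (γ : Γ),
         J ⟨S.lift (fun u => embC Γ (f u)) a γ, liftC_mem S 𝓛 hf a γ⟩
           = embC Γ (I ⟨f, hf⟩) * Xp γ) →
       ∀ (g : F → CGamma Γ) (hg : g ∈ LFspan S 𝓛) (τ : F)
         (hg' : (fun x => g (x + τ)) ∈ LFspan S 𝓛),
         J ⟨fun x => g (x + τ), hg'⟩ = J ⟨g, hg⟩) ∧
    (∀ c : CGamma Γ, (fun _ : F => c) ∈ LFspan S 𝓛 → c = 0) := by
  classical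
  obtain ⟨Iext, hIext⟩ := LinearMap.exists_extend I
  have hIeq : ∀ (f : k → ℂ) (hf : f ∈ 𝓛), Iext f = I ⟨f, hf⟩ := fun f hf =>
    DFunLike.congr_fun hIext ⟨f, hf⟩
  have hItrans : ∀ f ∈ 𝓛, ∀ c : k, Iext (fun u => f (u + c)) = Iext f := by
    intro f hf c
    rw [hIeq _ (h𝓛trans f hf c), hIeq f hf, hI f hf c]
  obtain ⟨J, hJ⟩ := exists_J S 𝓛 h𝓛trans h𝓛const Iext hItrans
  have hJ' : ∀ (f : k → ℂ) (hf : f ∈ 𝓛) (a : F) (γ : Γ),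
      J ⟨S.lift (fun u => embC Γ (f u)) a γ, liftC_mem S 𝓛 hf a γ⟩
        = embC Γ (I ⟨f, hf⟩) * Xp γ := by
    intro f hf a γ
    rw [hJ f hf a γ, hIeq f hf]
  refine ⟨⟨J, hJ', ?_⟩, LFspan_trans S 𝓛, ?_, ?_⟩
  · intro J₂ hJ₂
    exact LFspan_ext S 𝓛 J₂ J fun f hf a γ => by rw [hJ₂ f hf a γ, hJ' f hf a γ]
  · intro J₂ hJ₂ g hg τ hg'
    revert hg'
    induction hg using Submodule.span_induction with
    | mem x hx =>
      intro hg'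
      obtain ⟨f, hf, a, γ, rfl⟩ := hx
      have h1 : (fun y => S.lift (fun u => embC Γ (f u)) a γ (y + τ))
          = S.lift (fun u => embC Γ (f u)) (a - τ) γ := S.lift_comp_add _ a γ τ
      have e1 : (⟨fun y => S.lift (fun u => embC Γ (f u)) a γ (y + τ), hg'⟩ :
            LFspan S 𝓛) = ⟨S.lift (fun u => embC Γ (f u)) (a - τ) γ,
            liftC_mem S 𝓛 hf (a - τ) γ⟩ := Subtype.ext h1
      rw [e1, hJ₂ f hf (a - τ) γ]
      exact (hJ₂ f hf a γ).symm
    | zero =>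
      intro hg'
      have e1 : (⟨fun x : F => (0 : F → CGamma Γ) (x + τ), hg'⟩ : LFspan S 𝓛) = 0 :=
        Subtype.ext rfl
      have e2 : (⟨(0 : F → CGamma Γ), Submodule.zero_mem _⟩ : LFspan S 𝓛) = 0 :=
        Subtype.ext rfl
      rw [e1, e2]
    | add x y hx hy ihx ihy =>
      intro hg'
      have e1 : (⟨fun z : F => (x + y) (z + τ), hg'⟩ : LFspan S 𝓛)
          = ⟨fun z : F => x (z + τ), LFspan_trans S 𝓛 x hx τ⟩
            + ⟨fun z : F => y (z + τ), LFspan_trans S 𝓛 y hy τ⟩ := Subtype.ext rfl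
      have e2 : (⟨x + y, Submodule.add_mem _ hx hy⟩ : LFspan S 𝓛)
          = ⟨x, hx⟩ + ⟨y, hy⟩ := Subtype.ext rfl
      rw [e1, e2, map_add, map_add, ihx (LFspan_trans S 𝓛 x hx τ),
        ihy (LFspan_trans S 𝓛 y hy τ)]
    | smul r x hx ih =>
      intro hg'
      have e1 : (⟨fun z : F => (r • x) (z + τ), hg'⟩ : LFspan S 𝓛)
          = r • ⟨fun z : F => x (z + τ), LFspan_trans S 𝓛 x hx τ⟩ := Subtype.ext rfl
      have e2 : (⟨r • x, Submodule.smul_mem _ r hx⟩ : LFspan S 𝓛)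
          = r • ⟨x, hx⟩ := Subtype.ext rfl
      rw [e1, e2, LinearMap.map_smul, LinearMap.map_smul,
        ih (LFspan_trans S 𝓛 x hx τ)]
  · intro c hc
    obtain ⟨γ0, h0⟩ := LFspan_vanish S 𝓛 _ hc
    exact h0 (S.t (γ0 - S.one)) (S.t_ne _)
      (by rw [S.ν_t]; exact sub_lt_self _ S.one_pos)

end Statement2
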